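/- arXiv:quant-ph/9907019 — 3 statements merged into one kernel-verified Lean document; each statement's English description precedes it below -/
import Mathlib

section
/- Let M be a finite set of cardinality M ≥ 1, let λ ∈ (0,1), and let ε > 0 be such that λ · log₂(1/ε − 1) > 2. Then there exist at least N ≥ (1/M)·2^⌊εM⌋ distinct subsets A₁,…,A_N of M, each of cardinality ⌊εM⌋, such that |A_i ∩ A_j| < λ·⌊εM⌋ for all i ≠ j. -/
open Finset in
lemma aux_count_supersets {α : Type*} [DecidableEq α] [Fintype α] (S : Finset α) (k : ℕ) :
    ((Finset.powersetCard k (Finset.univ : Finset α)).filter (fun B => S ⊆ B)).card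
      ≤ (Fintype.card α - S.card).choose (k - S.card) := by
  have h1 : ((Finset.powersetCard k (Finset.univ : Finset α)).filter (fun B => S ⊆ B)).card
      ≤ ((Finset.univ \ S).powersetCard (k - S.card)).card := by
    apply Finset.card_le_card_of_injOn (fun B => B \ S)
    · intro B hB
      simp only [Finset.mem_coe, Finset.mem_filter, Finset.mem_powersetCard] at hB ⊢
      obtain ⟨⟨-, hcard⟩, hSB⟩ := hB
      refine ⟨Finset.sdiff_subset_sdiff (Finset.subset_univ _) le_rfl, ?_⟩
      rw [Finset.card_sdiff_of_subset hSB, hcard]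
    · intro B1 h1 B2 h2 hEq
      simp only [Finset.coe_filter, Set.mem_setOf_eq, Finset.mem_powersetCard] at h1 h2
      have hEq' : B1 \ S = B2 \ S := hEq
      have e1 := Finset.sdiff_union_of_subset h1.2
      have e2 := Finset.sdiff_union_of_subset h2.2
      rw [← e1, ← e2, hEq']
  rw [Finset.card_powersetCard, Finset.card_sdiff_of_subset (Finset.subset_univ S),
    Finset.card_univ] at h1
  exact h1

lemma aux_choose_ratio (M k : ℕ) (hk1 : 1 ≤ k) (hkM : k ≤ M) :
    ∀ t, t ≤ k → (((M : ℝ) - k + 1) / k) ^ t * (M.choose (k - t)) ≤ (M.choose k : ℝ) := by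
  have hk0 : (0:ℝ) < k := by exact_mod_cast hk1
  have hkMR : (k:ℝ) ≤ M := by exact_mod_cast hkM
  have hr0 : (0:ℝ) ≤ ((M : ℝ) - k + 1) / k := by
    apply div_nonneg _ (le_of_lt hk0)
    linarith
  intro t
  induction t with
  | zero => intro _; simp
  | succ t ih =>
    intro ht
    have ht' : t ≤ k := Nat.le_of_succ_le ht
    set j := k - (t+1) with hj
    have hjt : k - t = j + 1 := by omega
    have hjk : j + 1 ≤ k := by omega
    have hjM : j ≤ M := by omega
    have hjkR : (j:ℝ) + 1 ≤ (k:ℝ) := by exact_mod_cast hjk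
    have hjMR : (j:ℝ) ≤ (M:ℝ) := by exact_mod_cast hjM
    have hC0 : (0:ℝ) ≤ (M.choose j : ℝ) := Nat.cast_nonneg _
    have hj1 : (0:ℝ) < (j:ℝ) + 1 := by positivity
    have hkey : (((M : ℝ) - k + 1) / k) * (M.choose j) ≤ (M.choose (j+1) : ℝ) := by
      have hcast : (M.choose (j+1) : ℝ) * ((j:ℝ)+1) = (M.choose j : ℝ) * ((M : ℝ) - j) := by
        have hnat := Nat.choose_succ_right_eq M j
        have hc : ((M.choose (j+1) * (j+1) : ℕ) : ℝ) = ((M.choose j * (M - j) : ℕ) : ℝ) := by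
          rw [hnat]
        push_cast [Nat.cast_sub hjM] at hc
        linarith
      rw [div_mul_eq_mul_div, div_le_iff₀ hk0]
      have h2 : ((M : ℝ) - k + 1) ≤ ((M : ℝ) - j) := by linarith
      have key2 : ((M : ℝ) - k + 1) * (M.choose j) * ((j:ℝ)+1)
          ≤ ((M : ℝ) - j) * (M.choose j) * (k:ℝ) := by
        have hb : ((M : ℝ) - k + 1) * (M.choose j) ≤ ((M : ℝ) - j) * (M.choose j) :=
          mul_le_mul_of_nonneg_right h2 hC0
        calc ((M : ℝ) - k + 1) * (M.choose j) * ((j:ℝ)+1)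
            ≤ ((M : ℝ) - j) * (M.choose j) * ((j:ℝ)+1) :=
              mul_le_mul_of_nonneg_right hb (le_of_lt hj1)
          _ ≤ ((M : ℝ) - j) * (M.choose j) * (k:ℝ) := by
              apply mul_le_mul_of_nonneg_left hjkR
              apply mul_nonneg _ hC0; linarith
      nlinarith [key2, hcast]
    calc (((M : ℝ) - k + 1) / k) ^ (t+1) * (M.choose (k - (t+1)))
        = (((M : ℝ) - k + 1) / k) ^ t * ((((M : ℝ) - k + 1) / k) * (M.choose j)) := by
          rw [← hj]; ring
      _ ≤ (((M : ℝ) - k + 1) / k) ^ t * (M.choose (j+1)) :=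
          mul_le_mul_of_nonneg_left hkey (by positivity)
      _ = (((M : ℝ) - k + 1) / k) ^ t * (M.choose (k - t)) := by rw [hjt]
      _ ≤ (M.choose k : ℝ) := ih ht'

/-- Gilbert-type packing lemma: there exist at least `(1/M)·2^⌊εM⌋` distinct
subsets of a ground set of size `M`, each of cardinality `⌊εM⌋`, with pairwise
intersections of cardinality less than `λ·⌊εM⌋`. -/
theorem packing_lemma (M : ℕ) (hM : 1 ≤ M) (lam ε : ℝ)
    (hlam : lam ∈ Set.Ioo (0 : ℝ) 1) (hε : 0 < ε)
    (h : 2 < lam * Real.logb 2 (1 / ε - 1)) :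
    ∃ (N : ℕ) (A : Fin N → Finset (Fin M)),
      (1 / (M : ℝ)) * 2 ^ ⌊ε * M⌋₊ ≤ (N : ℝ) ∧
      Function.Injective A ∧
      (∀ i, (A i).card = ⌊ε * M⌋₊) ∧
      (∀ i j, i ≠ j → ((A i ∩ A j).card : ℝ) < lam * (⌊ε * M⌋₊ : ℝ)) := by
  classical
  obtain ⟨hlam0, hlam1⟩ := hlam
  set k := ⌊ε * M⌋₊ with hk
  have hlogpos : 0 < Real.logb 2 (1 / ε - 1) := by nlinarith
  have hxpos : 0 < 1 / ε - 1 := by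
    by_contra hx
    push_neg at hx
    have habs : |1 / ε - 1| ≤ 1 := by
      rw [abs_le]
      constructor
      · have : 0 < 1 / ε := by positivity
        linarith
      · linarith
    have hlog : Real.log (1 / ε - 1) ≤ 0 := by
      rw [← Real.log_abs]
      exact Real.log_nonpos (abs_nonneg _) habs
    have : Real.logb 2 (1 / ε - 1) ≤ 0 := by
      rw [Real.logb]
      exact div_nonpos_of_nonpos_of_nonneg hlog (le_of_lt (Real.log_pos one_lt_two))
    linarith
  have hlog2 : 2 < Real.logb 2 (1 / ε - 1) := by nlinarith
  have hx4 : 4 < 1 / ε - 1 := by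
    have h2 := (Real.lt_logb_iff_rpow_lt one_lt_two hxpos).mp hlog2
    have h24 : ((2:ℝ)) ^ (2:ℝ) = 4 := by
      norm_num [show ((2:ℝ)) ^ (2:ℝ) = (2:ℝ) ^ ((2:ℕ):ℝ) by norm_num, Real.rpow_natCast]
    linarith [h24 ▸ h2]
  have hε1 : ε < 1 := by
    have h5 : 5 < 1 / ε := by linarith
    nlinarith [(lt_div_iff₀ hε).mp h5]
  have hkεM : (k : ℝ) ≤ ε * M := Nat.floor_le (by positivity)
  have hkM : k < M := by
    have hMpos : (0:ℝ) < M := by exact_mod_cast hM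
    have : (k:ℝ) < M := by nlinarith
    exact_mod_cast this
  by_cases hk0 : k = 0
  · refine ⟨1, fun _ => ∅, ?_, ?_, ?_, ?_⟩
    · have hM1 : (1:ℝ) ≤ M := by exact_mod_cast hM
      rw [hk0]
      simp only [pow_zero, mul_one, Nat.cast_one]
      rw [div_le_one (by linarith)]
      linarith
    · intro i j _; exact Subsingleton.elim i j
    · intro _; simp [hk0]
    · intro i j hij; exact absurd (Subsingleton.elim i j) hij
  have hk1 : 1 ≤ k := Nat.one_le_iff_ne_zero.mpr hk0
  set t := ⌈lam * k⌉₊ with htdef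
  have hkR : (0:ℝ) < k := by exact_mod_cast hk1
  have htk : t ≤ k := by
    rw [htdef, Nat.ceil_le]
    nlinarith
  set 𝒜 : Finset (Finset (Fin M)) := Finset.powersetCard k Finset.univ with h𝒜
  set good : Finset (Finset (Fin M)) → Prop :=
    fun F => ∀ A ∈ F, ∀ B ∈ F, A ≠ B → (A ∩ B).card < t with hgood
  set 𝒢 : Finset (Finset (Finset (Fin M))) := 𝒜.powerset.filter good with h𝒢
  have h𝒢ne : 𝒢.Nonempty := ⟨∅, by simp [h𝒢, hgood]⟩
  obtain ⟨F, hF𝒢, hFmax⟩ := Finset.exists_max_image 𝒢 Finset.card h𝒢ne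
  rw [h𝒢, Finset.mem_filter, Finset.mem_powerset] at hF𝒢
  obtain ⟨hF𝒜, hFgood⟩ := hF𝒢
  rw [hgood] at hFgood
  have hcover : ∀ B ∈ 𝒜, ∃ A ∈ F, t ≤ (A ∩ B).card := by
    intro B hB
    by_contra hcon
    push_neg at hcon
    have hBF : B ∉ F := by
      intro hBF
      have := hcon B hBF
      rw [Finset.inter_self] at this
      have hBk : B.card = k := (Finset.mem_powersetCard.mp hB).2
      omega
    have hins : insert B F ∈ 𝒢 := by
      rw [h𝒢, Finset.mem_filter, Finset.mem_powerset]
      refine ⟨Finset.insert_subset hB hF𝒜, ?_⟩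
      rw [hgood]
      intro A1 h1 A2 h2 hne
      rcases Finset.mem_insert.mp h1 with hA1 | hA1 <;>
        rcases Finset.mem_insert.mp h2 with hA2 | hA2
      · exact absurd (hA1.trans hA2.symm) hne
      · subst hA1; rw [Finset.inter_comm]; exact hcon A2 hA2
      · subst hA2; exact hcon A1 hA1
      · exact hFgood A1 hA1 A2 hA2 hne
    have := hFmax _ hins
    rw [Finset.card_insert_of_notMem hBF] at this
    omega
  have hball : ∀ A ∈ F, (𝒜.filter (fun B => t ≤ (A ∩ B).card)).card
      ≤ k.choose t * (M - t).choose (k - t) := by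
    intro A hA
    have hAk : A.card = k := (Finset.mem_powersetCard.mp (hF𝒜 hA)).2
    have hsub : 𝒜.filter (fun B => t ≤ (A ∩ B).card)
        ⊆ (A.powersetCard t).biUnion (fun S => 𝒜.filter (fun B => S ⊆ B)) := by
      intro B hB
      rw [Finset.mem_filter] at hB
      obtain ⟨hB𝒜, hBt⟩ := hB
      obtain ⟨S, hS, hScard⟩ := Finset.exists_subset_card_eq hBt
      rw [Finset.mem_biUnion]
      refine ⟨S, ?_, ?_⟩
      · rw [Finset.mem_powersetCard]
        exact ⟨hS.trans (Finset.inter_subset_left), hScard⟩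
      · rw [Finset.mem_filter]
        exact ⟨hB𝒜, hS.trans Finset.inter_subset_right⟩
    calc (𝒜.filter (fun B => t ≤ (A ∩ B).card)).card
        ≤ ((A.powersetCard t).biUnion (fun S => 𝒜.filter (fun B => S ⊆ B))).card :=
          Finset.card_le_card hsub
      _ ≤ ∑ S ∈ A.powersetCard t, (𝒜.filter (fun B => S ⊆ B)).card :=
          Finset.card_biUnion_le
      _ ≤ ∑ S ∈ A.powersetCard t, (M - t).choose (k - t) := by
          apply Finset.sum_le_sum
          intro S hS
          have hScard : S.card = t := (Finset.mem_powersetCard.mp hS).2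
          have hcs := aux_count_supersets S k
          rw [hScard, Fintype.card_fin] at hcs
          exact hcs
      _ = k.choose t * (M - t).choose (k - t) := by
          rw [Finset.sum_const, Finset.card_powersetCard, hAk, smul_eq_mul]
  have hcount : M.choose k ≤ F.card * (k.choose t * (M - t).choose (k - t)) := by
    have h𝒜card : 𝒜.card = M.choose k := by
      rw [h𝒜, Finset.card_powersetCard, Finset.card_univ, Fintype.card_fin]
    have hsub : 𝒜 ⊆ F.biUnion (fun A => 𝒜.filter (fun B => t ≤ (A ∩ B).card)) := by
      intro B hB
      obtain ⟨A, hA, hAB⟩ := hcover B hB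
      rw [Finset.mem_biUnion]
      exact ⟨A, hA, Finset.mem_filter.mpr ⟨hB, hAB⟩⟩
    calc M.choose k = 𝒜.card := h𝒜card.symm
      _ ≤ (F.biUnion (fun A => 𝒜.filter (fun B => t ≤ (A ∩ B).card))).card :=
          Finset.card_le_card hsub
      _ ≤ ∑ A ∈ F, (𝒜.filter (fun B => t ≤ (A ∩ B).card)).card := Finset.card_biUnion_le
      _ ≤ ∑ A ∈ F, k.choose t * (M - t).choose (k - t) := Finset.sum_le_sum hball
      _ = F.card * (k.choose t * (M - t).choose (k - t)) := by
          rw [Finset.sum_const, smul_eq_mul]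
  have hchoose1 : k.choose t ≤ 2 ^ k := by
    calc k.choose t ≤ ∑ i ∈ Finset.range (k+1), k.choose i :=
          Finset.single_le_sum (f := fun i => k.choose i) (fun _ _ => Nat.zero_le _)
            (Finset.mem_range.mpr (Nat.lt_succ_of_le htk))
      _ = 2 ^ k := Nat.sum_range_choose k
  have hchoose2 : (M - t).choose (k - t) ≤ M.choose (k - t) :=
    Nat.choose_le_choose _ (Nat.sub_le M t)
  have hcount2 : M.choose k ≤ F.card * (2 ^ k * M.choose (k - t)) :=
    hcount.trans (Nat.mul_le_mul_left _ (Nat.mul_le_mul hchoose1 hchoose2))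
  set r : ℝ := ((M : ℝ) - k + 1) / k with hrdef
  have hxr : 1 / ε - 1 ≤ r := by
    rw [hrdef, le_div_iff₀ hkR]
    have h1 : (1 / ε - 1) * k = (k:ℝ) / ε - k := by ring
    rw [h1, sub_le_iff_le_add]
    have : (k:ℝ) / ε ≤ M := by
      rw [div_le_iff₀ hε]
      nlinarith
    linarith
  have hr1 : (1:ℝ) ≤ r := by linarith
  have hx0 : (0:ℝ) ≤ 1 / ε - 1 := by linarith
  have hpow : (4:ℝ) ^ k ≤ r ^ t := by
    have hlamk : lam * k ≤ (t:ℝ) := Nat.le_ceil _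
    have e1 : (4:ℝ) ^ k = (2:ℝ) ^ ((2 * k : ℝ)) := by
      rw [show ((2:ℝ) * k) = (((2 * k : ℕ)):ℝ) by push_cast; ring, Real.rpow_natCast,
        pow_mul]
      norm_num
    have e2 : (2:ℝ) ^ ((2 * k : ℝ)) ≤ (2:ℝ) ^ (Real.logb 2 (1 / ε - 1) * (lam * k)) := by
      apply Real.rpow_le_rpow_of_exponent_le one_le_two
      have hkpos : (0:ℝ) ≤ (k:ℝ) := Nat.cast_nonneg _
      nlinarith
    have e3 : (2:ℝ) ^ (Real.logb 2 (1 / ε - 1) * (lam * k)) = (1 / ε - 1) ^ (lam * k) := by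
      rw [Real.rpow_mul (by norm_num : (0:ℝ) ≤ 2),
        Real.rpow_logb (by norm_num) (by norm_num) hxpos]
    have e4 : (1 / ε - 1) ^ (lam * k) ≤ (1 / ε - 1) ^ ((t:ℕ):ℝ) :=
      Real.rpow_le_rpow_of_exponent_le (by linarith) hlamk
    have step1 : (4:ℝ) ^ k ≤ (1 / ε - 1) ^ ((t:ℕ):ℝ) := by
      rw [e1]; exact (e2.trans_eq e3).trans e4
    rw [Real.rpow_natCast] at step1
    exact step1.trans (pow_le_pow_left₀ hx0 hxr t)
  have hCpos : (0:ℝ) < (M.choose (k - t) : ℝ) := by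
    exact_mod_cast Nat.choose_pos (by omega)
  have hratio := aux_choose_ratio M k hk1 (le_of_lt hkM) t htk
  have hcount2R : (M.choose k : ℝ) ≤ (F.card : ℝ) * (2 ^ k * (M.choose (k - t) : ℝ)) := by
    exact_mod_cast hcount2
  have hchain : (4:ℝ) ^ k * (M.choose (k - t) : ℝ)
      ≤ (F.card : ℝ) * (2 ^ k * (M.choose (k - t) : ℝ)) :=
    (mul_le_mul_of_nonneg_right hpow (le_of_lt hCpos)).trans (hratio.trans hcount2R)
  have hN : (2:ℝ) ^ k ≤ (F.card : ℝ) := by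
    have h4 : (4:ℝ) ^ k = 2 ^ k * 2 ^ k := by
      rw [← mul_pow]; norm_num
    have hcpos : (0:ℝ) < 2 ^ k * (M.choose (k - t) : ℝ) := by positivity
    apply le_of_mul_le_mul_right _ hcpos
    calc (2:ℝ) ^ k * (2 ^ k * (M.choose (k - t) : ℝ))
        = (4:ℝ) ^ k * (M.choose (k - t) : ℝ) := by rw [h4]; ring
      _ ≤ (F.card : ℝ) * (2 ^ k * (M.choose (k - t) : ℝ)) := hchain
  set A : Fin F.card → Finset (Fin M) := fun i => ((F.equivFin.symm i : {x // x ∈ F}) : Finset (Fin M)) with hA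
  have hAmem : ∀ i, A i ∈ F := fun i => (F.equivFin.symm i).2
  have hAinj : Function.Injective A := by
    intro i j hij
    exact F.equivFin.symm.injective (Subtype.ext hij)
  refine ⟨F.card, A, ?_, hAinj, ?_, ?_⟩
  · have hM1 : (1:ℝ) ≤ M := by exact_mod_cast hM
    have h2pos : (0:ℝ) ≤ (2:ℝ) ^ k := by positivity
    have hle : (1 / (M:ℝ)) * 2 ^ k ≤ 1 * 2 ^ k := by
      apply mul_le_mul_of_nonneg_right _ h2pos
      rw [div_le_one (by linarith)]
      linarith
    linarith
  · intro i
    exact (Finset.mem_powersetCard.mp (hF𝒜 (hAmem i))).2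
  · intro i j hij
    have hne : A i ≠ A j := fun hEq => hij (hAinj hEq)
    exact Nat.lt_ceil.mp (hFgood _ (hAmem i) _ (hAmem j) hne)
end

section
/- Let Q and R be probability distributions on a finite set B with R(x) > 0 for all x. Then for every μ > 0, d₁(Q,R) ≤ (2/log₂ e)·μ + 2·Q[{x : log₂(Q(x)/R(x)) > μ}], where d₁(Q,R) = ∑_{x∈B} |Q(x) − R(x)|. -/
open Classical in
/-- For probability distributions `Q, R` on a finite set `B` with `R > 0`,
`d₁(Q,R) ≤ (2/log₂ e)·μ + 2·Q[{x : log₂(Q(x)/R(x)) > μ}]` for every `μ > 0`. -/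
theorem variational_distance_le {B : Type*} [Fintype B]
    (Q R : B → ℝ) (hQ0 : ∀ x, 0 ≤ Q x) (hQ1 : ∑ x, Q x = 1)
    (hR0 : ∀ x, 0 < R x) (hR1 : ∑ x, R x = 1) (μ : ℝ) (hμ : 0 < μ) :
    ∑ x, |Q x - R x| ≤
      (2 / Real.logb 2 (Real.exp 1)) * μ +
        2 * ∑ x ∈ Finset.univ.filter (fun x => μ < Real.logb 2 (Q x / R x)), Q x := by
  have hln2 : 0 < Real.log 2 := Real.log_pos one_lt_two
  have hcoef : (2 : ℝ) / Real.logb 2 (Real.exp 1) = 2 * Real.log 2 := by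
    rw [Real.logb, Real.log_exp]
    field_simp
  -- rewrite |Q - R| via positive part
  have habs : ∀ x, |Q x - R x| = 2 * max (Q x - R x) 0 - (Q x - R x) := by
    intro x
    rcases le_or_gt (Q x - R x) 0 with h | h
    · rw [abs_of_nonpos h, max_eq_right h]; ring
    · rw [abs_of_pos h, max_eq_left h.le]; ring
  have hsum : ∑ x, |Q x - R x| = 2 * ∑ x, max (Q x - R x) 0 := by
    simp_rw [habs]
    rw [Finset.sum_sub_distrib, Finset.sum_sub_distrib, ← Finset.mul_sum, hQ1, hR1]
    ring
  rw [hsum, hcoef]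
  set p : B → Prop := fun x => μ < Real.logb 2 (Q x / R x) with hp
  have hsplit := Finset.sum_filter_add_sum_filter_not Finset.univ p
    (fun x => max (Q x - R x) 0)
  -- bound on S
  have h1 : ∑ x ∈ Finset.univ.filter p, max (Q x - R x) 0 ≤
      ∑ x ∈ Finset.univ.filter p, Q x := by
    apply Finset.sum_le_sum
    intro x _
    exact max_le (by linarith [(hR0 x).le]) (hQ0 x)
  -- bound off S
  have h2 : ∑ x ∈ Finset.univ.filter (fun x => ¬ p x), max (Q x - R x) 0 ≤
      Real.log 2 * μ := by
    have step : ∀ x ∈ Finset.univ.filter (fun x => ¬ p x),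
        max (Q x - R x) 0 ≤ Q x * (Real.log 2 * μ) := by
      intro x hx
      have hxp : Real.logb 2 (Q x / R x) ≤ μ := by
        simp only [Finset.mem_filter, hp] at hx
        exact not_lt.mp hx.2
      have hnn : 0 ≤ Q x * (Real.log 2 * μ) :=
        mul_nonneg (hQ0 x) (mul_nonneg hln2.le hμ.le)
      rcases eq_or_lt_of_le (hQ0 x) with hq | hq
      · have : max (Q x - R x) 0 = 0 := max_eq_right (by linarith [(hR0 x)])
        rw [this]; exact hnn
      · -- Q x > 0
        have hdiv : 0 < Q x / R x := div_pos hq (hR0 x)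
        have hle : Q x / R x ≤ (2 : ℝ) ^ μ := by
          have := (Real.logb_le_iff_le_rpow one_lt_two hdiv).mp hxp
          exact this
        have h2pos : (0:ℝ) < (2 : ℝ) ^ μ := Real.rpow_pos_of_pos two_pos μ
        have hR : Q x / (2:ℝ) ^ μ ≤ R x := by
          rw [div_le_iff₀ (hR0 x)] at hle
          rw [div_le_iff₀ h2pos]; linarith
        have hkey : Q x - R x ≤ Q x * (1 - ((2:ℝ) ^ μ)⁻¹) := by
          have : Q x * ((2:ℝ) ^ μ)⁻¹ = Q x / (2:ℝ) ^ μ := by ring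
          nlinarith [hR]
        have hexp : (((2:ℝ) ^ μ)⁻¹ : ℝ) = Real.exp (-(μ * Real.log 2)) := by
          rw [← Real.rpow_neg two_pos.le, Real.rpow_def_of_pos two_pos]
          ring_nf
        have hbound : 1 - ((2:ℝ) ^ μ)⁻¹ ≤ Real.log 2 * μ := by
          rw [hexp]
          have := Real.add_one_le_exp (-(μ * Real.log 2))
          nlinarith
        refine max_le ?_ hnn
        calc Q x - R x ≤ Q x * (1 - ((2:ℝ) ^ μ)⁻¹) := hkey
          _ ≤ Q x * (Real.log 2 * μ) := by nlinarith
      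
    calc ∑ x ∈ Finset.univ.filter (fun x => ¬ p x), max (Q x - R x) 0
        ≤ ∑ x ∈ Finset.univ.filter (fun x => ¬ p x), Q x * (Real.log 2 * μ) :=
          Finset.sum_le_sum step
      _ = (∑ x ∈ Finset.univ.filter (fun x => ¬ p x), Q x) * (Real.log 2 * μ) := by
          rw [Finset.sum_mul]
      _ ≤ 1 * (Real.log 2 * μ) := by
          apply mul_le_mul_of_nonneg_right _ (mul_nonneg hln2.le hμ.le)
          rw [← hQ1]
          exact Finset.sum_le_sum_of_subset_of_nonneg (Finset.filter_subset _ _)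
            (fun x _ _ => hQ0 x)
      _ = Real.log 2 * μ := one_mul _
  linarith [hsplit]
end

section
/- Let W : A → (Fin b → ℝ≥0) be a map from a finite set A to sub-probability assignments on Fin b with ∑_y W(x)(y) ≤ 1 and each W(x)(y) ≥ 0. Let C₁,…,C_N be subsets of a finite index set M = {1,…,M}, each of size s ≥ 1, with |C_i ∩ C_j| < λs for i ≠ j, where 0 < λ. Suppose codewords (c_m)_{m∈M} ∈ A^M and a family of nonnegative operators is abstracted as: for each m, a value e(x, m) ∈ [0,1] with ∑_m e(x,m) ≤ 1 for each x, and e(c_m, m) ≥ 1 − λ. Define P_i as the uniform distribution on {c_m : m ∈ C_i} and D_i-probability of P_j as (1/s)∑_{m∈C_i}∑_{m'∈C_j} e(c_{m'}, m). Then for i ≠ j, (1/s)∑_{m∈C_j}∑_{m'∈C_i} e(c_{m'}, m) ≤ 2λ. -/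
/-- Cross-error bound in the direct part of the simultaneous Q-ID coding theorem:
with code sets of pairwise intersection less than `λs` and a measurement with
success probability at least `1−λ` on correct codewords, the probability of
false identification is at most `2λ`. -/
theorem cross_error_bound {A : Type*} [Fintype A] (Mc N : ℕ)
    (C : Fin N → Finset (Fin Mc)) (s : ℕ) (hs : 1 ≤ s)
    (hcard : ∀ i, (C i).card = s)
    (lam : ℝ) (hlam : 0 < lam)
    (hint : ∀ i j, i ≠ j → ((C i ∩ C j).card : ℝ) < lam * s)
    (c : Fin Mc → A) (e : A → Fin Mc → ℝ)
    (he0 : ∀ x m, 0 ≤ e x m) (he1 : ∀ x m, e x m ≤ 1)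
    (hsum : ∀ x, ∑ m, e x m ≤ 1)
    (hgood : ∀ m, 1 - lam ≤ e (c m) m) :
    ∀ i j, i ≠ j →
      (1 / (s : ℝ)) * ∑ m ∈ C j, ∑ m' ∈ C i, e (c m') m ≤ 2 * lam := by
  intro i j hij
  have hspos : (0:ℝ) < s := by exact_mod_cast hs
  rw [Finset.sum_comm, one_div, inv_mul_le_iff₀ hspos]
  -- bound the sum
  have hsub : ∀ m' ∈ C i \ C j, ∑ m ∈ C j, e (c m') m ≤ lam := by
    intro m' hm'
    have hnot : m' ∉ C j := (Finset.mem_sdiff.mp hm').2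
    have h1 : ∑ m ∈ C j, e (c m') m ≤ ∑ m ∈ Finset.univ.erase m', e (c m') m := by
      apply Finset.sum_le_sum_of_subset_of_nonneg
      · intro x hx
        exact Finset.mem_erase.mpr ⟨fun h => hnot (h ▸ hx), Finset.mem_univ x⟩
      · intro x _ _; exact he0 _ _
    have h2 : ∑ m ∈ Finset.univ.erase m', e (c m') m
        = (∑ m, e (c m') m) - e (c m') m' := by
      rw [Finset.sum_erase_eq_sub (Finset.mem_univ m')]
    have := hgood m'
    have := hsum (c m')
    linarith [h1, h2]
  have hinter : ∀ m' ∈ C i ∩ C j, ∑ m ∈ C j, e (c m') m ≤ 1 := by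
    intro m' _
    calc ∑ m ∈ C j, e (c m') m ≤ ∑ m, e (c m') m := by
          apply Finset.sum_le_sum_of_subset_of_nonneg (Finset.subset_univ _)
          intro x _ _; exact he0 _ _
      _ ≤ 1 := hsum _
  have hsplit : ∑ m' ∈ C i, ∑ m ∈ C j, e (c m') m
      = (∑ m' ∈ C i ∩ C j, ∑ m ∈ C j, e (c m') m)
        + ∑ m' ∈ C i \ C j, ∑ m ∈ C j, e (c m') m :=
    (Finset.sum_inter_add_sum_sdiff (C i) (C j) _).symm
  have b1 : ∑ m' ∈ C i ∩ C j, ∑ m ∈ C j, e (c m') m ≤ ((C i ∩ C j).card : ℝ) := by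
    calc ∑ m' ∈ C i ∩ C j, ∑ m ∈ C j, e (c m') m
        ≤ ∑ m' ∈ C i ∩ C j, (1:ℝ) := Finset.sum_le_sum hinter
      _ = ((C i ∩ C j).card : ℝ) := by simp
  have b2 : ∑ m' ∈ C i \ C j, ∑ m ∈ C j, e (c m') m ≤ (s : ℝ) * lam := by
    calc ∑ m' ∈ C i \ C j, ∑ m ∈ C j, e (c m') m
        ≤ ∑ m' ∈ C i \ C j, lam := Finset.sum_le_sum hsub
      _ = ((C i \ C j).card : ℝ) * lam := by rw [Finset.sum_const, nsmul_eq_mul]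
      _ ≤ (s : ℝ) * lam := by
          apply mul_le_mul_of_nonneg_right _ hlam.le
          exact_mod_cast (hcard i ▸ Finset.card_le_card (Finset.sdiff_subset))
  have hc := hint i j hij
  rw [hsplit]
  nlinarith [b1, b2, hc]
end
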